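/- Let n be a finite index type, B : Matrix n n ℝ, and define the support relation R i j iff B i j ≠ 0. Let ∼ denote the SCC equivalence: i ∼ j iff i reaches j and j reaches i under the reflexive-transitive closure of R. Let S ⊆ n be closed under ∼ (i ∈ S and i ∼ j imply j ∈ S). If 1 − B is invertible, then the principal submatrix of 1 − B with rows and columns restricted to the complement of S (as a matrix indexed by the subtype {i // i ∉ S}) is also invertible. -/

import Mathlib

open Matrix

/-- Vertices `u` and `v` are in the same strongly connected component of `E`. -/
def SCCEq {V : Type*} (E : V → V → Prop) (u v : V) : Prop :=
  Relation.ReflTransGen E u v ∧ Relation.ReflTransGen E v u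

/-- if `S` is a union of SCCs of the support graph of `B`
and `1 - B` is invertible, then the principal submatrix of `1 - B` on the
complement of `S` is invertible. -/
theorem principal_submatrix_invertible {n : Type*} [Fintype n] [DecidableEq n]
    (B : Matrix n n ℝ) (S : Set n) [DecidablePred (· ∈ S)]
    (hS : ∀ i j, i ∈ S → SCCEq (fun a b => B a b ≠ 0) i j → j ∈ S)
    (h : IsUnit ((1 : Matrix n n ℝ) - B)) :
    IsUnit (((1 : Matrix n n ℝ) - B).submatrix
      (fun i : {i : n // i ∉ S} => (i : n)) (fun j : {j : n // j ∉ S} => (j : n))) := by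
  classical
  set E : n → n → Prop := fun a b => B a b ≠ 0 with hE
  set M : Matrix n n ℝ := 1 - B with hMdef
  -- Key: permutations with all relevant entries nonzero preserve S
  have key : ∀ σ : Equiv.Perm n, (∀ i, M (σ i) i ≠ 0) → ∀ i, (i ∈ S ↔ σ i ∈ S) := by
    intro σ hσ i
    have step : ∀ j, Relation.ReflTransGen E (σ j) j := by
      intro j
      by_cases hj : σ j = j
      · rw [hj]
      · refine Relation.ReflTransGen.single ?_
        have := hσ j
        have h1 : M (σ j) j = -B (σ j) j := by
          simp [hMdef, Matrix.sub_apply, Matrix.one_apply_ne hj]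
        rw [h1] at this
        simpa [hE] using this
    have pow : ∀ (k : ℕ) (j : n), Relation.ReflTransGen E ((σ ^ k) j) j := by
      intro k
      induction k with
      | zero => intro j; simpa using Relation.ReflTransGen.refl
      | succ k ih =>
        intro j
        have h1 : (σ ^ (k + 1)) j = (σ ^ k) (σ j) := by
          rw [pow_succ]; rfl
        rw [h1]
        exact (ih (σ j)).trans (step j)
    have hord : (σ ^ (orderOf σ - 1)) (σ i) = i := by
      have h1 : σ ^ (orderOf σ - 1) * σ = σ ^ orderOf σ := by
        rw [← pow_succ]
        congr 1
        exact Nat.succ_pred_eq_of_pos (orderOf_pos σ)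
      have h2 : (σ ^ (orderOf σ - 1)) (σ i) = (σ ^ orderOf σ) i := by
        rw [← h1]; rfl
      rw [h2, pow_orderOf_eq_one]; rfl
    have fwd : Relation.ReflTransGen E i (σ i) := by
      have := pow (orderOf σ - 1) (σ i)
      rwa [hord] at this
    have hscc : SCCEq E i (σ i) := ⟨fwd, step i⟩
    constructor
    · intro hi; exact hS i (σ i) hi hscc
    · intro hi; exact hS (σ i) i hi ⟨hscc.2, hscc.1⟩
  -- block-diagonalized matrix
  set M' : Matrix n n ℝ := fun i j => if (i ∈ S ↔ j ∈ S) then M i j else 0 with hM'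
  have hdet : M.det = M'.det := by
    rw [Matrix.det_apply', Matrix.det_apply']
    refine Finset.sum_congr rfl ?_
    intro σ _
    congr 1
    by_cases hσ : ∀ i, M (σ i) i ≠ 0
    · refine Finset.prod_congr rfl ?_
      intro i _
      have := (key σ hσ i).symm
      simp [hM', this]
    · push_neg at hσ
      obtain ⟨i, hi⟩ := hσ
      rw [Finset.prod_eq_zero (Finset.mem_univ i), Finset.prod_eq_zero (Finset.mem_univ i)]
      · simp [hM', hi]
      · exact hi
  -- reindex M' as a block diagonal matrix
  set A : Matrix {i : n // i ∈ S} {i : n // i ∈ S} ℝ :=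
    M.submatrix (fun i => (i : n)) (fun j => (j : n)) with hA
  set D : Matrix {i : n // i ∉ S} {i : n // i ∉ S} ℝ :=
    M.submatrix (fun i => (i : n)) (fun j => (j : n)) with hD
  have hblock : M'.submatrix (Equiv.sumCompl (· ∈ S)) (Equiv.sumCompl (· ∈ S)) =
      Matrix.fromBlocks A 0 0 D := by
    ext i j
    cases i with
    | inl a =>
      cases j with
      | inl b => simp [Matrix.submatrix, hM', hA, a.2, b.2]
      | inr b => simp [Matrix.submatrix, hM', a.2, b.2]
    | inr a =>
      cases j with
      | inl b => simp [Matrix.submatrix, hM', a.2, b.2]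
      | inr b => simp [Matrix.submatrix, hM', hD, a.2, b.2]
  have hdet2 : M'.det = A.det * D.det := by
    rw [← Matrix.det_submatrix_equiv_self (Equiv.sumCompl (· ∈ S)) M', hblock,
      Matrix.det_fromBlocks_zero₁₂]
  have hMdet : M.det ≠ 0 := by
    have := h.map (Matrix.detMonoidHom (n := n) (R := ℝ))
    simpa [isUnit_iff_ne_zero] using this
  have hDdet : D.det ≠ 0 := by
    intro h0
    apply hMdet
    rw [hdet, hdet2, h0, mul_zero]
  rw [Matrix.isUnit_iff_isUnit_det]
  simpa [isUnit_iff_ne_zero] using hDdet
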